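/- Let k ≥ 3 be an odd integer and χ a real non-principal Dirichlet character modulo q. Assume that every zero of L(s,χ) with real part strictly between 0 and 1 has real part 1/2. Then there exists a function G : ℂ → ℂ that is differentiable (holomorphic) on the open half-plane {s : Re(s) > 1/(2k)} and satisfies G(s) = ∑_{n=1}^{∞} μ^(k)(n)·g_χ(n)·n^{−s} for every s with Re(s) > 1. -/

import Mathlib

open Complex Finset
open scoped Classical

open scoped LSeries.notation

lemma aux_norm_cpow_lt_one {p : ℕ} (hp : 2 ≤ p) {s : ℂ} (hs : 0 < s.re) :
    ‖(p : ℂ) ^ (-s)‖ < 1 := by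
  rw [Complex.norm_natCast_cpow_of_pos (by omega)]
  apply Real.rpow_lt_one_of_one_lt_of_neg
  · exact_mod_cast (by omega : 1 < p)
  · simpa using hs

lemma aux_one_sub_ne_zero {x : ℂ} (h : ‖x‖ < 1) : 1 - x ≠ 0 := by
  intro h0
  have : x = 1 := by linear_combination -h0
  simp [this] at h

lemma aux_hasProd_inv {ι : Type*} {f : ι → ℂ} {a : ℂ} (h : HasProd f a) (ha : a ≠ 0) :
    HasProd (fun i => (f i)⁻¹) a⁻¹ := by
  have h' : Filter.Tendsto (fun s : Finset ι => ∏ i ∈ s, f i) Filter.atTop (nhds a) := h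
  have h2 := h'.inv₀ ha
  simp only [← Finset.prod_inv_distrib] at h2
  exact h2

/-- the summand `n ↦ g n * n ^ (-w)` as a `MonoidWithZeroHom`, for completely
multiplicative `g`. -/
noncomputable def gSummand (g : ℕ → ℂ) (hg1 : g 1 = 1)
    (hgmul : ∀ m n : ℕ, g (m * n) = g m * g n) (w : ℂ) (hw : w ≠ 0) : ℕ →*₀ ℂ where
  toFun n := g n * (n : ℂ) ^ (-w)
  map_zero' := by
    simp [Complex.zero_cpow (neg_ne_zero.mpr hw)]
  map_one' := by simp [hg1]
  map_mul' m n := by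
    have h : ((m * n : ℕ) : ℂ) ^ (-w) = (m : ℂ) ^ (-w) * (n : ℂ) ^ (-w) := by
      simpa only [Nat.cast_mul, ofReal_natCast]
        using mul_cpow_ofReal_nonneg m.cast_nonneg n.cast_nonneg (-w)
    show g (m * n) * ((m * n : ℕ) : ℂ) ^ (-w) = _
    rw [hgmul, h]
    ring

lemma gSummand_apply (g : ℕ → ℂ) (hg1 : g 1 = 1)
    (hgmul : ∀ m n : ℕ, g (m * n) = g m * g n) (w : ℂ) (hw : w ≠ 0) (n : ℕ) :
    gSummand g hg1 hgmul w hw n = g n * (n : ℂ) ^ (-w) := rfl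

/-- Odd case: under RH for `L(s,χ)`, the Dirichlet series of
`f = μ^(k) g_χ` extends holomorphically to the half-plane `Re(s) > 1/(2k)`. -/
theorem analytic_continuation_odd
    (k : ℕ) (hk : 3 ≤ k) (hkodd : Odd k)
    (q : ℕ) [NeZero q] (χ : DirichletCharacter ℂ q)
    (hχreal : ∀ n : ZMod q, χ n = -1 ∨ χ n = 0 ∨ χ n = 1) (hχ : χ ≠ 1)
    (hGRH : ∀ s : ℂ, 0 < s.re → s.re < 1 → DirichletCharacter.LFunction χ s = 0 → s.re = 1 / 2)
    (g : ℕ → ℂ) (hg1 : g 1 = 1)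
    (hgmul : ∀ m n : ℕ, g (m * n) = g m * g n)
    (hgp : ∀ p : ℕ, p.Prime → g p = if p ∣ q then 1 else χ (p : ZMod q))
    (f : ℕ → ℂ)
    (hf : ∀ n : ℕ, f n = if ∀ p : ℕ, p.Prime → ¬ p ^ k ∣ n then g n else 0) :
    ∃ G : ℂ → ℂ,
      DifferentiableOn ℂ G {s : ℂ | 1 / (2 * (k : ℝ)) < s.re} ∧
      ∀ s : ℂ, 1 < s.re → G s = ∑' n : ℕ, f n * (n : ℂ) ^ (-s) := by
  classical
  have hk0 : (0 : ℝ) < (k : ℝ) := by positivity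
  have hk1 : (1 : ℝ) ≤ (k : ℝ) := by exact_mod_cast (by omega : 1 ≤ k)
  -- value facts about g
  have hgval : ∀ p : ℕ, p.Prime → g p = -1 ∨ g p = 0 ∨ g p = 1 := by
    intro p hp
    rw [hgp p hp]
    split_ifs
    · right; right; rfl
    · exact hχreal _
  have hgpowk : ∀ p : ℕ, p.Prime → g p ^ k = g p := by
    intro p hp
    rcases hgval p hp with h | h | h <;> rw [h]
    · exact hkodd.neg_one_pow
    · exact zero_pow (by omega)
    · exact one_pow k
  have hgk : ∀ p : ℕ, ∀ e : ℕ, g (p ^ e) = g p ^ e := by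
    intro p e
    induction e with
    | zero => simpa using hg1
    | succ e ih => rw [pow_succ, hgmul, ih, pow_succ]
  have hgle : ∀ n : ℕ, ‖g n‖ ≤ 1 := by
    intro n
    induction n using Nat.recOnMul with
    | zero =>
        have h0 := hgmul 0 0
        rw [mul_zero] at h0
        have : g 0 * (g 0 - 1) = 0 := by linear_combination -h0
        rcases mul_eq_zero.mp this with h | h
        · simp [h]
        · have : g 0 = 1 := by linear_combination h
          simp [this]
    | one => simp [hg1]
    | prime p hp =>
        rcases hgval p hp with h | h | h <;> simp [h]
    | mul a b ha hb =>
        rw [hgmul, norm_mul]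
        exact mul_le_one₀ ha (norm_nonneg _) hb
  -- facts about f
  have hkne : k ≠ 0 := by omega
  have hf1 : f 1 = 1 := by
    rw [hf, if_pos, hg1]
    intro p hp hdvd
    have h1 : p ^ k ≤ 1 := Nat.le_of_dvd one_pos hdvd
    have h2 : 1 < p ^ k := Nat.one_lt_pow hkne hp.one_lt
    omega
  have hf0 : f 0 = 0 := by
    rw [hf, if_neg]
    push_neg
    exact ⟨2, Nat.prime_two, dvd_zero _⟩
  have hfp : ∀ p : ℕ, p.Prime → ∀ e : ℕ, f (p ^ e) = if e < k then g p ^ e else 0 := by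
    intro p hp e
    rw [hf]
    by_cases he : e < k
    · rw [if_pos, if_pos he, hgk]
      intro r hr hdvd
      have hrp : r = p := by
        have h1 : r ∣ p ^ e := dvd_trans (dvd_pow_self r hkne) hdvd
        exact (Nat.prime_dvd_prime_iff_eq hr hp).mp (hr.dvd_of_dvd_pow h1)
      subst hrp
      have := (Nat.pow_dvd_pow_iff_le_right hp.one_lt).mp hdvd
      omega
    · rw [if_neg, if_neg he]
      push_neg
      exact ⟨p, hp, pow_dvd_pow p (by omega)⟩
  have hfmul : ∀ m n : ℕ, Nat.Coprime m n → f (m * n) = f m * f n := by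
    intro m n hmn
    by_cases hm : ∀ p : ℕ, p.Prime → ¬ p ^ k ∣ m
    · by_cases hn : ∀ p : ℕ, p.Prime → ¬ p ^ k ∣ n
      · rw [hf m, hf n, if_pos hm, if_pos hn, hf, if_pos, hgmul]
        intro p hp hdvd
        have hpd : p ∣ m * n := dvd_trans (dvd_pow_self p hkne) hdvd
        rcases hp.dvd_mul.mp hpd with h | h
        · have hpn : ¬ p ∣ n := fun hpn =>
            Nat.Prime.one_lt hp |>.ne' (Nat.eq_one_of_dvd_coprimes hmn h hpn)
          have hcop : Nat.Coprime (p ^ k) n :=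
            Nat.Coprime.pow_left k ((Nat.Prime.coprime_iff_not_dvd hp).mpr hpn)
          exact hm p hp (hcop.dvd_of_dvd_mul_right hdvd)
        · have hpm : ¬ p ∣ m := fun hpm =>
            Nat.Prime.one_lt hp |>.ne' (Nat.eq_one_of_dvd_coprimes hmn hpm h)
          have hcop : Nat.Coprime (p ^ k) m :=
            Nat.Coprime.pow_left k ((Nat.Prime.coprime_iff_not_dvd hp).mpr hpm)
          exact hn p hp (hcop.dvd_of_dvd_mul_left hdvd)
      · push_neg at hn
        obtain ⟨p, hp, hd⟩ := hn
        rw [hf (m * n), if_neg, hf n, if_neg, mul_zero]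
        · push_neg; exact ⟨p, hp, hd⟩
        · push_neg; exact ⟨p, hp, hd.trans (dvd_mul_left n m)⟩
    · push_neg at hm
      obtain ⟨p, hp, hd⟩ := hm
      rw [hf (m * n), if_neg, hf m, if_neg, zero_mul]
      · push_neg; exact ⟨p, hp, hd⟩
      · push_neg; exact ⟨p, hp, hd.trans (dvd_mul_right m n)⟩
  have hfle : ∀ n : ℕ, ‖f n‖ ≤ 1 := by
    intro n
    rw [hf]
    split_ifs
    · exact hgle n
    · simp
  -- q ≠ 1
  have hq1 : q ≠ 1 := by
    rintro rfl
    exact hχ (DirichletCharacter.level_one χ)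
  -- χ vanishes on primes dividing q
  have hχp : ∀ p : ℕ, p.Prime → p ∣ q → χ (p : ZMod q) = 0 := by
    intro p hp hpq
    exact χ.map_nonunit (by rw [ZMod.isUnit_prime_iff_not_dvd hp]; exact fun h => h hpq)
  -- summability
  have hZsum : ∀ w : ℂ, 1 < w.re → Summable (fun n : ℕ => ‖(n : ℂ) ^ (-w)‖) := by
    intro w hw
    have := summable_riemannZetaSummand hw
    simpa only [riemannZetaSummandHom, MonoidWithZeroHom.coe_mk, ZeroHom.coe_mk] using this
  have hgsum : ∀ w : ℂ, 1 < w.re → Summable (fun n : ℕ => ‖g n * (n : ℂ) ^ (-w)‖) := by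
    intro w hw
    apply (hZsum w hw).of_nonneg_of_le (fun _ => norm_nonneg _)
    intro n
    rw [norm_mul]
    exact mul_le_of_le_one_left (norm_nonneg _) (hgle n)
  have hfsum : ∀ w : ℂ, 1 < w.re → Summable (fun n : ℕ => ‖f n * (n : ℂ) ^ (-w)‖) := by
    intro w hw
    apply (hZsum w hw).of_nonneg_of_le (fun _ => norm_nonneg _)
    intro n
    rw [norm_mul]
    exact mul_le_of_le_one_left (norm_nonneg _) (hfle n)
  -- definitions
  set P : ℂ → ℂ := fun w => ∏ p ∈ q.primeFactors, (1 - (p : ℂ) ^ (-w))⁻¹ with hP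
  set A : ℂ → ℂ := fun w => DirichletCharacter.LFunction χ w * P w with hA
  -- Euler product for A
  have hAprod : ∀ w : ℂ, 1 < w.re →
      HasProd (Set.mulIndicator {p : ℕ | p.Prime}
        (fun p => (1 - g p * (p : ℂ) ^ (-w))⁻¹)) (A w) := by
    intro w hw
    have hχprod := DirichletCharacter.LSeries_eulerProduct_hasProd χ hw
    rw [← DirichletCharacter.LFunction_eq_LSeries χ hw] at hχprod
    have hχind : HasProd (Set.mulIndicator {p : ℕ | p.Prime}
        (fun p => (1 - χ (p : ZMod q) * (p : ℂ) ^ (-w))⁻¹)) (DirichletCharacter.LFunction χ w) := by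
      rw [← hasProd_subtype_iff_mulIndicator]
      exact hχprod
    have hcprod : HasProd (fun p : ℕ => if p ∈ q.primeFactors then (1 - (p : ℂ) ^ (-w))⁻¹ else 1)
        (P w) := by
      have h1 : HasProd (fun p : ℕ => if p ∈ q.primeFactors then (1 - (p : ℂ) ^ (-w))⁻¹ else 1)
          (∏ p ∈ q.primeFactors, if p ∈ q.primeFactors then (1 - (p : ℂ) ^ (-w))⁻¹ else 1) :=
        hasProd_prod_of_ne_finset_one (fun b hb => if_neg hb)
      have h2 : (∏ p ∈ q.primeFactors, if p ∈ q.primeFactors then (1 - (p : ℂ) ^ (-w))⁻¹ else 1)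
          = P w := Finset.prod_congr rfl (fun p hp => if_pos hp)
      rwa [h2] at h1
    have hfun : (fun p : ℕ => Set.mulIndicator {p : ℕ | p.Prime}
          (fun p => (1 - χ (p : ZMod q) * (p : ℂ) ^ (-w))⁻¹) p *
          (if p ∈ q.primeFactors then (1 - (p : ℂ) ^ (-w))⁻¹ else 1))
        = Set.mulIndicator {p : ℕ | p.Prime} (fun p => (1 - g p * (p : ℂ) ^ (-w))⁻¹) := by
      funext p
      by_cases hp : p.Prime
      · have hp' : p ∈ {p : ℕ | Nat.Prime p} := hp
        rw [Set.mulIndicator_of_mem hp', Set.mulIndicator_of_mem hp']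
        by_cases hpq : p ∣ q
        · rw [if_pos (Nat.mem_primeFactors.mpr ⟨hp, hpq, NeZero.ne q⟩),
            hχp p hp hpq, hgp p hp, if_pos hpq]
          simp
        · rw [if_neg (fun h => hpq (Nat.mem_primeFactors.mp h).2.1), hgp p hp, if_neg hpq,
            mul_one]
      · have hp' : p ∉ {p : ℕ | Nat.Prime p} := hp
        rw [Set.mulIndicator_of_notMem hp', Set.mulIndicator_of_notMem hp',
          if_neg (fun h => hp (Nat.mem_primeFactors.mp h).1), mul_one]
    have := hχind.mul hcprod
    rwa [show (fun p : ℕ => Set.mulIndicator {p : ℕ | p.Prime}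
          (fun p => (1 - χ (p : ZMod q) * (p : ℂ) ^ (-w))⁻¹) p *
          (if p ∈ q.primeFactors then (1 - (p : ℂ) ^ (-w))⁻¹ else 1))
        = Set.mulIndicator {p : ℕ | p.Prime} (fun p => (1 - g p * (p : ℂ) ^ (-w))⁻¹) from hfun]
      at this
  -- nonvanishing of A
  have hAne : ∀ w : ℂ, 1 / 2 < w.re → A w ≠ 0 := by
    intro w hw
    apply mul_ne_zero
    · by_cases h1 : 1 ≤ w.re
      · exact DirichletCharacter.LFunction_ne_zero_of_one_le_re χ (.inl hχ) h1
      · intro h0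
        have := hGRH w (by linarith) (by linarith) h0
        linarith
    · rw [hP]
      apply Finset.prod_ne_zero_iff.mpr
      intro p hp
      apply inv_ne_zero
      apply aux_one_sub_ne_zero
      exact aux_norm_cpow_lt_one (Nat.mem_primeFactors.mp hp).1.two_le (by linarith)
  -- differentiability of A on the right half plane
  have hAdiff : DifferentiableOn ℂ A {w : ℂ | 0 < w.re} := by
    apply DifferentiableOn.mul
    · exact (DirichletCharacter.differentiable_LFunction hχ).differentiableOn
    · apply DifferentiableOn.fun_finsetProd
      intro p hp
      apply DifferentiableOn.inv
      · apply DifferentiableOn.const_sub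
        exact (Differentiable.const_cpow differentiable_id.neg
          (Or.inl (Nat.cast_ne_zero.mpr (Nat.mem_primeFactors.mp hp).1.pos.ne'))).differentiableOn
      · intro w hw
        exact aux_one_sub_ne_zero
          (aux_norm_cpow_lt_one (Nat.mem_primeFactors.mp hp).1.two_le hw)
  have hre : ∀ s : ℂ, ((k : ℂ) * s).re = (k : ℝ) * s.re := by
    intro s
    simp [Complex.mul_re]
  refine ⟨fun s => A s * (A ((k : ℂ) * s))⁻¹, ?_, ?_⟩
  · -- differentiability
    have hsub : {s : ℂ | 1 / (2 * (k : ℝ)) < s.re} ⊆ {w : ℂ | 0 < w.re} := by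
      intro s hs
      simp only [Set.mem_setOf_eq] at hs ⊢
      have : (0:ℝ) < 1 / (2 * (k : ℝ)) := by positivity
      linarith
    have hmaps : Set.MapsTo (fun s : ℂ => (k : ℂ) * s) {s : ℂ | 1 / (2 * (k : ℝ)) < s.re}
        {w : ℂ | 0 < w.re} := by
      intro s hs
      simp only [Set.mem_setOf_eq] at hs ⊢
      rw [hre]
      have : (0:ℝ) < 1 / (2 * (k : ℝ)) := by positivity
      nlinarith
    apply DifferentiableOn.mul (hAdiff.mono hsub)
    apply DifferentiableOn.inv
    · exact hAdiff.comp ((differentiable_id.const_mul _).differentiableOn) hmaps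
    · intro s hs
      simp only [Set.mem_setOf_eq] at hs
      apply hAne
      rw [hre]
      have h12 : (k : ℝ) * (1 / (2 * (k : ℝ))) = 1 / 2 := by
        field_simp
      nlinarith
  · -- the identity for re s > 1
    intro s hs
    have hw2 : 1 < ((k : ℂ) * s).re := by
      rw [hre]; nlinarith
    have hsne : s ≠ 0 := ne_zero_of_one_lt_re hs
    have hs0 : 0 < s.re := by linarith
    -- Euler product for f
    have hfprod : HasProd (Set.mulIndicator {p : ℕ | p.Prime}
        (fun p => ∑' e : ℕ, f (p ^ e) * ((p ^ e : ℕ) : ℂ) ^ (-s)))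
        (∑' n : ℕ, f n * (n : ℂ) ^ (-s)) := by
      have hF1 : f 1 * ((1 : ℕ) : ℂ) ^ (-s) = 1 := by simp [hf1]
      have hF0 : f 0 * ((0 : ℕ) : ℂ) ^ (-s) = 0 := by simp [hf0]
      have hFmul : ∀ {m n : ℕ}, Nat.Coprime m n →
          f (m * n) * ((m * n : ℕ) : ℂ) ^ (-s)
            = (f m * (m : ℂ) ^ (-s)) * (f n * (n : ℂ) ^ (-s)) := by
        intro m n hmn
        have h : ((m * n : ℕ) : ℂ) ^ (-s) = (m : ℂ) ^ (-s) * (n : ℂ) ^ (-s) := by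
          simpa only [Nat.cast_mul, ofReal_natCast]
            using mul_cpow_ofReal_nonneg m.cast_nonneg n.cast_nonneg (-s)
        rw [hfmul m n hmn, h]
        ring
      have h := EulerProduct.eulerProduct_hasProd_mulIndicator
        (f := fun n : ℕ => f n * (n : ℂ) ^ (-s)) hF1 hFmul (hfsum s hs) hF0
      exact h
    -- local factor computation
    have hlocal : ∀ p : ℕ, p.Prime →
        (∑' e : ℕ, f (p ^ e) * ((p ^ e : ℕ) : ℂ) ^ (-s))
          = (1 - g p * (p : ℂ) ^ (-s))⁻¹ * ((1 - g p * (p : ℂ) ^ (-((k : ℂ) * s)))⁻¹)⁻¹ := by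
      intro p hp
      set x : ℂ := g p * (p : ℂ) ^ (-s) with hx
      have hxk : x ^ k = g p * (p : ℂ) ^ (-((k : ℂ) * s)) := by
        rw [hx, mul_pow, hgpowk p hp]
        congr 1
        rw [← Complex.cpow_nat_mul]
        congr 1
        push_cast
        ring
      have hxe : ∀ e : ℕ, f (p ^ e) * ((p ^ e : ℕ) : ℂ) ^ (-s)
          = if e < k then x ^ e else 0 := by
        intro e
        rw [hfp p hp e]
        by_cases he : e < k
        · rw [if_pos he, if_pos he, hx, mul_pow]
          congr 1
          rw [Nat.cast_pow, ← Complex.natCast_cpow_natCast_mul, ← Complex.cpow_nat_mul]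
        · rw [if_neg he, if_neg he, zero_mul]
      have hxnorm : ‖x‖ < 1 := by
        rw [hx, norm_mul]
        calc ‖g p‖ * ‖(p : ℂ) ^ (-s)‖ ≤ 1 * ‖(p : ℂ) ^ (-s)‖ := by
              apply mul_le_mul_of_nonneg_right (hgle p) (norm_nonneg _)
          _ = ‖(p : ℂ) ^ (-s)‖ := one_mul _
          _ < 1 := aux_norm_cpow_lt_one hp.two_le hs0
      have hx1 : x ≠ 1 := fun h => by simp [h] at hxnorm
      have hx1' : (1 : ℂ) - x ≠ 0 := aux_one_sub_ne_zero hxnorm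
      calc (∑' e : ℕ, f (p ^ e) * ((p ^ e : ℕ) : ℂ) ^ (-s))
          = ∑' e : ℕ, if e < k then x ^ e else 0 := by
            exact tsum_congr hxe
        _ = ∑ e ∈ Finset.range k, (if e < k then x ^ e else 0) :=
            tsum_eq_sum (fun e he => if_neg (by simpa using he))
        _ = ∑ e ∈ Finset.range k, x ^ e :=
            Finset.sum_congr rfl (fun e he => if_pos (Finset.mem_range.mp he))
        _ = (x ^ k - 1) / (x - 1) := geom_sum_eq hx1 k
        _ = (1 - x)⁻¹ * ((1 - x ^ k)⁻¹)⁻¹ := by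
            rw [inv_inv, ← neg_div_neg_eq, neg_sub, neg_sub, div_eq_inv_mul]
        _ = (1 - g p * (p : ℂ) ^ (-s))⁻¹ * ((1 - g p * (p : ℂ) ^ (-((k : ℂ) * s)))⁻¹)⁻¹ := by
            rw [hxk, hx]
    -- combine
    have ha : HasProd (Set.mulIndicator {p : ℕ | p.Prime}
        (fun p => (1 - g p * (p : ℂ) ^ (-s))⁻¹)) (A s) := hAprod s hs
    have hb : HasProd (Set.mulIndicator {p : ℕ | p.Prime}
        (fun p => (1 - g p * (p : ℂ) ^ (-((k : ℂ) * s)))⁻¹)) (A ((k : ℂ) * s)) := by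
      have := hAprod ((k : ℂ) * s) hw2
      simpa using this
    have hbne : A ((k : ℂ) * s) ≠ 0 := hAne _ (by rw [hre]; nlinarith)
    have hbinv := aux_hasProd_inv hb hbne
    have hcomb := ha.mul hbinv
    have hfun2 : (fun p : ℕ => Set.mulIndicator {p : ℕ | p.Prime}
          (fun p => (1 - g p * (p : ℂ) ^ (-s))⁻¹) p *
          (Set.mulIndicator {p : ℕ | p.Prime}
            (fun p => (1 - g p * (p : ℂ) ^ (-((k : ℂ) * s)))⁻¹) p)⁻¹)
        = Set.mulIndicator {p : ℕ | p.Prime}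
            (fun p => ∑' e : ℕ, f (p ^ e) * ((p ^ e : ℕ) : ℂ) ^ (-s)) := by
      funext p
      by_cases hp : p.Prime
      · have hp' : p ∈ {p : ℕ | Nat.Prime p} := hp
        rw [Set.mulIndicator_of_mem hp', Set.mulIndicator_of_mem hp',
          Set.mulIndicator_of_mem hp', hlocal p hp]
      · have hp' : p ∉ {p : ℕ | Nat.Prime p} := hp
        rw [Set.mulIndicator_of_notMem hp', Set.mulIndicator_of_notMem hp',
          Set.mulIndicator_of_notMem hp']
        simp
    rw [hfun2] at hcomb
    exact (hcomb.unique hfprod)
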